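/- Fix y ∈ ℝ, τ ∈ (0,1), m ∈ ℝ and ν > 0, and let w(η) = |τ − 1_{(y−η) ≤ 0}|, i.e. w(η) = τ if η < y and w(η) = 1 − τ if η ≥ y. Writing W = τ Φ(y; m, ν²) + (1 − τ)(1 − Φ(y; m, ν²)), one has ∫ [ −(y − η) w(η) ] φ(η; m, ν²) dη = −(y − m) W + (1 − 2τ) ν² φ(y; m, ν²). -/

import Mathlib

open MeasureTheory Real Filter
open Topology

/-- Gaussian density with mean `m` and variance `ν ^ 2`, evaluated at `x`:
`φ(x; m, ν²) = (2πν²)^{-1/2} exp(−(x−m)²/(2ν²))`. -/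
noncomputable def gpdf (m ν x : ℝ) : ℝ :=
  (Real.sqrt (2 * Real.pi * ν ^ 2))⁻¹ * Real.exp (-((x - m) ^ 2) / (2 * ν ^ 2))

/-- Gaussian cumulative distribution function with mean `m` and variance `ν ^ 2`:
`Φ(c; m, ν²) = ∫_{−∞}^{c} φ(η; m, ν²) dη`. -/
noncomputable def gcdf (m ν c : ℝ) : ℝ := ∫ x in Set.Iio c, gpdf m ν x

namespace ExpectileAux

variable {m ν : ℝ}

lemma gpdf_eq_pdfReal (hν : 0 < ν) :
    gpdf m ν = ProbabilityTheory.gaussianPDFReal m ⟨ν ^ 2, sq_nonneg ν⟩ := by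
  ext x
  simp [gpdf, ProbabilityTheory.gaussianPDFReal]
  rfl

lemma integrable_gpdf (hν : 0 < ν) : Integrable (gpdf m ν) := by
  rw [gpdf_eq_pdfReal hν]
  exact ProbabilityTheory.integrable_gaussianPDFReal _ _

lemma integral_gpdf (hν : 0 < ν) : ∫ x, gpdf m ν x = 1 := by
  rw [gpdf_eq_pdfReal hν]
  exact ProbabilityTheory.integral_gaussianPDFReal_eq_one _
    (fun h => pow_ne_zero 2 hν.ne' (congrArg Subtype.val h))

lemma hasDeriv (hν : 0 < ν) (x : ℝ) :
    HasDerivAt (fun t => -(ν ^ 2) * gpdf m ν t) ((x - m) * gpdf m ν x) x := by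
  have hν2 : (ν : ℝ) ^ 2 ≠ 0 := pow_ne_zero _ hν.ne'
  have h0 : HasDerivAt (fun t : ℝ => (t - m) ^ 2) (2 * (x - m)) x := by
    simpa using ((hasDerivAt_id x).sub_const m).fun_pow 2
  have h1 : HasDerivAt (fun t : ℝ => -((t - m) ^ 2) / (2 * ν ^ 2)) (-(x - m) / ν ^ 2) x := by
    have := h0.fun_neg.div_const (2 * ν ^ 2)
    refine this.congr_deriv ?_
    field_simp
  have h2 := (h1.exp.const_mul ((Real.sqrt (2 * Real.pi * ν ^ 2))⁻¹)).const_mul (-(ν ^ 2))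
  refine h2.congr_deriv ?_
  simp only [gpdf]
  field_simp

lemma integrable_sub_mul (hν : 0 < ν) :
    Integrable (fun x => (x - m) * gpdf m ν x) := by
  have hb : (0 : ℝ) < 1 / (2 * ν ^ 2) := by positivity
  have h := ((integrable_mul_exp_neg_mul_sq hb).const_mul
    ((Real.sqrt (2 * Real.pi * ν ^ 2))⁻¹)).comp_sub_right m
  refine h.congr (ae_of_all _ fun x => ?_)
  simp only [gpdf]
  rw [show -(1 / (2 * ν ^ 2)) * (x - m) ^ 2 = -((x - m) ^ 2) / (2 * ν ^ 2) by ring]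
  ring

lemma tendsto_arg_atTop (hν : 0 < ν) :
    Tendsto (fun x : ℝ => -((x - m) ^ 2) / (2 * ν ^ 2)) atTop atBot := by
  have h1 : Tendsto (fun x : ℝ => (x - m) ^ 2) atTop atTop :=
    ((tendsto_pow_atTop two_ne_zero).comp
      (tendsto_atTop_add_const_right atTop (-m) tendsto_id)).congr
      fun x => by simp [sub_eq_add_neg]
  have h2 := h1.atTop_mul_const_of_neg (r := -(2 * ν ^ 2)⁻¹)
    (neg_lt_zero.mpr (by positivity))
  refine h2.congr fun x => ?_
  field_simp

lemma tendsto_arg_atBot (hν : 0 < ν) :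
    Tendsto (fun x : ℝ => -((x - m) ^ 2) / (2 * ν ^ 2)) atBot atBot := by
  have hmx : Tendsto (fun x : ℝ => m - x) atBot atTop :=
    (tendsto_atTop_add_const_left atBot m tendsto_neg_atBot_atTop).congr
      fun x => by simp [sub_eq_add_neg]
  have h1 : Tendsto (fun x : ℝ => (x - m) ^ 2) atBot atTop :=
    ((tendsto_pow_atTop two_ne_zero).comp hmx).congr fun x => by
      simp only [Function.comp_apply]; ring
  have h2 := h1.atTop_mul_const_of_neg (r := -(2 * ν ^ 2)⁻¹)
    (neg_lt_zero.mpr (by positivity))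
  refine h2.congr fun x => ?_
  field_simp

lemma tendsto_gpdf_atTop (hν : 0 < ν) : Tendsto (gpdf m ν) atTop (𝓝 0) := by
  have := (Real.tendsto_exp_atBot.comp (tendsto_arg_atTop (m := m) hν)).const_mul
    ((Real.sqrt (2 * Real.pi * ν ^ 2))⁻¹)
  unfold gpdf
  simpa [Function.comp] using this

lemma tendsto_gpdf_atBot (hν : 0 < ν) : Tendsto (gpdf m ν) atBot (𝓝 0) := by
  have := (Real.tendsto_exp_atBot.comp (tendsto_arg_atBot (m := m) hν)).const_mul
    ((Real.sqrt (2 * Real.pi * ν ^ 2))⁻¹)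
  unfold gpdf
  simpa [Function.comp] using this

lemma integral_Iic_sub_mul (hν : 0 < ν) (y : ℝ) :
    ∫ x in Set.Iic y, (x - m) * gpdf m ν x = -(ν ^ 2) * gpdf m ν y := by
  have h := integral_Iic_of_hasDerivAt_of_tendsto'
    (f := fun x => -(ν ^ 2) * gpdf m ν x) (f' := fun x => (x - m) * gpdf m ν x)
    (a := y) (m := 0)
    (fun x _ => hasDeriv hν x) ((integrable_sub_mul hν).integrableOn)
    (by simpa using (tendsto_gpdf_atBot (m := m) hν).const_mul (-(ν ^ 2)))
  simpa using h

lemma integral_Ioi_sub_mul (hν : 0 < ν) (y : ℝ) :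
    ∫ x in Set.Ioi y, (x - m) * gpdf m ν x = ν ^ 2 * gpdf m ν y := by
  have h := integral_Ioi_of_hasDerivAt_of_tendsto'
    (f := fun x => -(ν ^ 2) * gpdf m ν x) (f' := fun x => (x - m) * gpdf m ν x)
    (a := y) (m := 0)
    (fun x _ => hasDeriv hν x) ((integrable_sub_mul hν).integrableOn)
    (by simpa using (tendsto_gpdf_atTop (m := m) hν).const_mul (-(ν ^ 2)))
  rw [h]; ring

lemma integral_Ici_gpdf (hν : 0 < ν) (y : ℝ) :
    ∫ x in Set.Ici y, gpdf m ν x = 1 - gcdf m ν y := by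
  have h := integral_add_compl (measurableSet_Iio (a := y)) (integrable_gpdf (m := m) hν)
  rw [Set.compl_Iio] at h
  have := integral_gpdf (m := m) hν
  rw [this] at h
  simp only [gcdf]
  linarith [h]

end ExpectileAux

open ExpectileAux in
theorem expectile_Psi1 (y τ m ν : ℝ) (hτ : τ ∈ Set.Ioo (0 : ℝ) 1) (hν : 0 < ν) :
    ∫ η, (-(y - η) * (if η < y then τ else 1 - τ)) * gpdf m ν η
      = -(y - m) * (τ * gcdf m ν y + (1 - τ) * (1 - gcdf m ν y))
        + (1 - 2 * τ) * ν ^ 2 * gpdf m ν y := by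
  set c : ℝ := gcdf m ν y with hc
  set g : ℝ := gpdf m ν y with hg
  have hint_sub : Integrable (fun x => (x - m) * gpdf m ν x) := integrable_sub_mul hν
  have hint_pdf : Integrable (gpdf m ν) := integrable_gpdf hν
  have hint_y : Integrable (fun x => (x - y) * gpdf m ν x) := by
    have := hint_sub.add (hint_pdf.const_mul (m - y))
    refine this.congr (ae_of_all _ fun x => ?_)
    simp only [Pi.add_apply]
    ring
  -- the integrand
  have hcont : Continuous (gpdf m ν) := by
    unfold gpdf; fun_prop
  have hmeas : AEStronglyMeasurable
      (fun η => (-(y - η) * (if η < y then τ else 1 - τ)) * gpdf m ν η) volume := by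
    apply Measurable.aestronglyMeasurable
    exact (((measurable_const.sub measurable_id).neg).mul
      (Measurable.ite measurableSet_Iio measurable_const measurable_const)).mul
      hcont.measurable
  have hint : Integrable
      (fun η => (-(y - η) * (if η < y then τ else 1 - τ)) * gpdf m ν η) := by
    refine Integrable.mono' ((hint_y.abs.const_mul (max τ (1 - τ)))) hmeas
      (ae_of_all _ fun x => ?_)
    have hw : |if x < y then τ else 1 - τ| ≤ max τ (1 - τ) := by
      split <;> rw [abs_of_nonneg (by linarith [hτ.1, hτ.2])]
      · exact le_max_left _ _
      · exact le_max_right _ _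
    calc ‖(-(y - x) * (if x < y then τ else 1 - τ)) * gpdf m ν x‖
        = |x - y| * |if x < y then τ else 1 - τ| * |gpdf m ν x| := by
          rw [Real.norm_eq_abs, abs_mul, abs_mul, abs_neg, abs_sub_comm]
      _ ≤ |x - y| * max τ (1 - τ) * |gpdf m ν x| := by
          gcongr
      _ = max τ (1 - τ) * |(x - y) * gpdf m ν x| := by rw [abs_mul]; ring
  -- split the integral
  have hsplit : (∫ η, (-(y - η) * (if η < y then τ else 1 - τ)) * gpdf m ν η)
      = (∫ η in Set.Iio y, (-(y - η) * (if η < y then τ else 1 - τ)) * gpdf m ν η)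
        + ∫ η in Set.Ici y, (-(y - η) * (if η < y then τ else 1 - τ)) * gpdf m ν η := by
    rw [← integral_add_compl (measurableSet_Iio (a := y)) hint, Set.compl_Iio]
  have hIio : (∫ η in Set.Iio y, (-(y - η) * (if η < y then τ else 1 - τ)) * gpdf m ν η)
      = τ * (-(ν ^ 2) * g + (m - y) * c) := by
    have e1 : ∀ η ∈ Set.Iio y,
        (-(y - η) * (if η < y then τ else 1 - τ)) * gpdf m ν η
          = τ * ((η - m) * gpdf m ν η + (m - y) * gpdf m ν η) := by
      intro η hη
      rw [if_pos (show η < y from hη)]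
      ring
    rw [setIntegral_congr_fun measurableSet_Iio e1, integral_const_mul,
      integral_add (hint_sub.integrableOn) ((hint_pdf.const_mul _).integrableOn),
      integral_const_mul, ← integral_Iic_eq_integral_Iio, integral_Iic_sub_mul hν]
    simp only [hc, hg, gcdf]
  have hIci : (∫ η in Set.Ici y, (-(y - η) * (if η < y then τ else 1 - τ)) * gpdf m ν η)
      = (1 - τ) * (ν ^ 2 * g + (m - y) * (1 - c)) := by
    have e1 : ∀ η ∈ Set.Ici y,
        (-(y - η) * (if η < y then τ else 1 - τ)) * gpdf m ν η
          = (1 - τ) * ((η - m) * gpdf m ν η + (m - y) * gpdf m ν η) := by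
      intro η hη
      rw [if_neg (not_lt.mpr (show y ≤ η from hη))]
      ring
    rw [setIntegral_congr_fun measurableSet_Ici e1, integral_const_mul,
      integral_add (hint_sub.integrableOn) ((hint_pdf.const_mul _).integrableOn),
      integral_const_mul, integral_Ici_eq_integral_Ioi, integral_Ioi_sub_mul hν,
      integral_Ici_gpdf hν]
  rw [hsplit, hIio, hIci]
  ring
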